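/- Let Θ and Y be measurable spaces, let μ be a probability measure on Θ (the prior), let κ be a Markov kernel from Θ to Y, and let m := μ ∘ κ denote the mixture measure on Y, i.e., m(B) = ∫_Θ κ(θ)(B) dμ(θ). Then for every probability measure R on Y, the Bayesian redundancy decomposes as ∫_Θ D(κ(θ) ‖ R) dμ(θ) = ∫_Θ D(κ(θ) ‖ m) dμ(θ) + D(m ‖ R), where D(·‖·) denotes Kullback–Leibler divergence with values in [0, ∞]. Consequently ∫_Θ D(κ(θ) ‖ R) dμ(θ) ≥ ∫_Θ D(κ(θ) ‖ m) dμ(θ) for every probability measure R, and when ∫_Θ D(κ(θ) ‖ m) dμ(θ) is finite, equality holds if and only if R = m. -/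

import Mathlib

open MeasureTheory
open scoped ENNReal

section
open Real

namespace KLAux

section
variable {Y : Type*} [MeasurableSpace Y] {P Q R m : Measure Y}


variable {Y : Type*} [MeasurableSpace Y] {P Q : Measure Y}

lemma lintegral_inv_rnDeriv_le [IsProbabilityMeasure P] [IsProbabilityMeasure Q]
    (hPQ : P ≪ Q) : ∫⁻ y, (P.rnDeriv Q y)⁻¹ ∂P ≤ 1 := by
  rw [← lintegral_rnDeriv_mul hPQ (f := fun y => (P.rnDeriv Q y)⁻¹) (Measure.measurable_rnDeriv P Q).inv.aemeasurable]
  calc ∫⁻ y, P.rnDeriv Q y * (P.rnDeriv Q y)⁻¹ ∂Q ≤ ∫⁻ _, 1 ∂Q :=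
        lintegral_mono fun y => ENNReal.mul_inv_le_one _
    _ = 1 := by simp

/-- The negative part of the log-likelihood ratio has integral at most 1. -/
lemma lintegral_ofReal_neg_llr_le [IsProbabilityMeasure P] [IsProbabilityMeasure Q]
    (hPQ : P ≪ Q) : ∫⁻ y, ENNReal.ofReal (-(llr P Q y)) ∂P ≤ 1 := by
  refine le_trans ?_ (lintegral_inv_rnDeriv_le hPQ)
  refine lintegral_mono_ae ?_
  filter_upwards [Measure.rnDeriv_pos hPQ, hPQ.ae_le (P.rnDeriv_lt_top Q)] with y hy0 hyt
  have ht : 0 < (P.rnDeriv Q y).toReal := ENNReal.toReal_pos hy0.ne' hyt.ne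
  have h1 : -(llr P Q y) = log ((P.rnDeriv Q y).toReal)⁻¹ := by
    rw [llr, ← Real.log_inv]
  rw [h1]
  calc ENNReal.ofReal (log ((P.rnDeriv Q y).toReal)⁻¹)
      ≤ ENNReal.ofReal ((P.rnDeriv Q y).toReal)⁻¹ :=
        ENNReal.ofReal_le_ofReal ((Real.log_le_sub_one_of_pos (by positivity)).trans (by linarith))
    _ = (P.rnDeriv Q y)⁻¹ := by
        rw [← ENNReal.toReal_inv, ENNReal.ofReal_toReal (by simp [hy0.ne'])]

lemma integrable_toReal_inv_rnDeriv [IsProbabilityMeasure P] [IsProbabilityMeasure Q]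
    (hPQ : P ≪ Q) : Integrable (fun y => ((P.rnDeriv Q y)⁻¹).toReal) P :=
  integrable_toReal_of_lintegral_ne_top (Measure.measurable_rnDeriv P Q).inv.aemeasurable
    ((lintegral_inv_rnDeriv_le hPQ).trans_lt ENNReal.one_lt_top).ne

lemma integral_toReal_inv_rnDeriv_le [IsProbabilityMeasure P] [IsProbabilityMeasure Q]
    (hPQ : P ≪ Q) : ∫ y, ((P.rnDeriv Q y)⁻¹).toReal ∂P ≤ 1 := by
  rw [integral_toReal (f := fun y => (P.rnDeriv Q y)⁻¹) (Measure.measurable_rnDeriv P Q).inv.aemeasurable ?_]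
  · exact le_trans (ENNReal.toReal_mono ENNReal.one_ne_top (lintegral_inv_rnDeriv_le hPQ))
      (by simp)
  · filter_upwards [Measure.rnDeriv_pos hPQ] with y hy0
    simp [ENNReal.inv_lt_top, hy0]

/-- The a.e.-nonnegative auxiliary function `1/f - 1 + log f`. -/
lemma aux_nonneg [IsProbabilityMeasure P] [IsProbabilityMeasure Q] (hPQ : P ≪ Q) :
    ∀ᵐ y ∂P, 0 ≤ ((P.rnDeriv Q y)⁻¹).toReal - 1 + llr P Q y := by
  filter_upwards [Measure.rnDeriv_pos hPQ, hPQ.ae_le (P.rnDeriv_lt_top Q)] with y hy0 hyt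
  have ht : 0 < (P.rnDeriv Q y).toReal := ENNReal.toReal_pos hy0.ne' hyt.ne
  have h2 : log ((P.rnDeriv Q y).toReal)⁻¹ ≤ ((P.rnDeriv Q y).toReal)⁻¹ - 1 :=
    Real.log_le_sub_one_of_pos (by positivity)
  rw [Real.log_inv] at h2
  rw [llr, ENNReal.toReal_inv]
  linarith

/-- Gibbs' inequality. -/
lemma integral_llr_nonneg [IsProbabilityMeasure P] [IsProbabilityMeasure Q]
    (hPQ : P ≪ Q) (hint : Integrable (llr P Q) P) : 0 ≤ ∫ y, llr P Q y ∂P := by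
  have hinv2 := integrable_toReal_inv_rnDeriv hPQ
  have hsub : Integrable (fun y => ((P.rnDeriv Q y)⁻¹).toReal - 1) P :=
    hinv2.sub (integrable_const 1)
  have h0 : 0 ≤ ∫ y, (((P.rnDeriv Q y)⁻¹).toReal - 1 + llr P Q y) ∂P :=
    integral_nonneg_of_ae (aux_nonneg hPQ)
  rw [integral_add hsub hint, integral_sub hinv2 (integrable_const 1)]
    at h0
  have h1 := integral_toReal_inv_rnDeriv_le hPQ
  simp only [integral_const, probReal_univ, ENNReal.toReal_one, smul_eq_mul, one_mul, mul_one] at h0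
  linarith

/-- Equality case: if the KL integral is zero then the measures are equal. -/
lemma eq_of_integral_llr_nonpos [IsProbabilityMeasure P] [IsProbabilityMeasure Q]
    (hPQ : P ≪ Q) (hint : Integrable (llr P Q) P) (hle : ∫ y, llr P Q y ∂P ≤ 0) :
    P = Q := by
  have hD := Measure.measurable_rnDeriv P Q
  have hinv := integrable_toReal_inv_rnDeriv hPQ
  have hnn := aux_nonneg hPQ
  have hsub : Integrable (fun y => ((P.rnDeriv Q y)⁻¹).toReal - 1) P :=
    hinv.sub (integrable_const 1)
  have hIh : Integrable (fun y => ((P.rnDeriv Q y)⁻¹).toReal - 1 + llr P Q y) P :=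
    hsub.add hint
  have hcalc : ∫ y, (((P.rnDeriv Q y)⁻¹).toReal - 1 + llr P Q y) ∂P
      = (∫ y, ((P.rnDeriv Q y)⁻¹).toReal ∂P) - 1 + ∫ y, llr P Q y ∂P := by
    rw [integral_add hsub hint, integral_sub hinv (integrable_const 1)]
    simp
  have hIle := integral_toReal_inv_rnDeriv_le hPQ
  have hge0 : 0 ≤ ∫ y, (((P.rnDeriv Q y)⁻¹).toReal - 1 + llr P Q y) ∂P :=
    integral_nonneg_of_ae hnn
  have hzero : ∫ y, (((P.rnDeriv Q y)⁻¹).toReal - 1 + llr P Q y) ∂P = 0 := by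
    rw [hcalc]; linarith [integral_llr_nonneg hPQ hint]
  -- all slack vanishes
  have hIinv : ∫ y, ((P.rnDeriv Q y)⁻¹).toReal ∂P = 1 := by
    rw [hcalc] at hzero
    have := integral_llr_nonneg hPQ hint
    linarith
  -- pointwise: rnDeriv = 1 a.e. P
  have hae0 : (fun y => ((P.rnDeriv Q y)⁻¹).toReal - 1 + llr P Q y) =ᵐ[P] 0 :=
    (integral_eq_zero_iff_of_nonneg_ae hnn hIh).mp hzero
  have hone : ∀ᵐ y ∂P, P.rnDeriv Q y = 1 := by
    filter_upwards [hae0, Measure.rnDeriv_pos hPQ, hPQ.ae_le (P.rnDeriv_lt_top Q)]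
      with y hy hy0 hyt
    have ht : 0 < (P.rnDeriv Q y).toReal := ENNReal.toReal_pos hy0.ne' hyt.ne
    set t := (P.rnDeriv Q y).toReal with htdef
    simp only [Pi.zero_apply] at hy
    rw [ENNReal.toReal_inv, llr] at hy
    by_contra hne
    have htne : t ≠ 1 := by
      intro h1
      exact hne (by rw [← ENNReal.ofReal_toReal hyt.ne, ← htdef, h1, ENNReal.ofReal_one])
    have htne' : t⁻¹ ≠ 1 := by simpa [inv_eq_one] using htne
    have := Real.log_lt_sub_one_of_pos (x := t⁻¹) (by positivity) htne'
    rw [Real.log_inv] at this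
    rw [← htdef] at hy
    linarith
  -- lintegral of D⁻¹ equals 1
  have hLinv : ∫⁻ y, (P.rnDeriv Q y)⁻¹ ∂P = 1 := by
    have hfin : ∀ᵐ y ∂P, (P.rnDeriv Q y)⁻¹ < ⊤ := by
      filter_upwards [Measure.rnDeriv_pos hPQ] with y hy0
      simp [ENNReal.inv_lt_top, hy0]
    have := integral_toReal (f := fun y => (P.rnDeriv Q y)⁻¹) hD.inv.aemeasurable hfin
    rw [hIinv] at this
    have hle1 := lintegral_inv_rnDeriv_le hPQ
    have : (∫⁻ y, (P.rnDeriv Q y)⁻¹ ∂P).toReal = 1 := this.symm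
    rcases eq_or_lt_of_le hle1 with h | h
    · exact h
    · exfalso
      have hne : (∫⁻ y, (P.rnDeriv Q y)⁻¹ ∂P) ≠ ⊤ := (h.trans ENNReal.one_lt_top).ne
      rw [← ENNReal.ofReal_toReal hne, this, ENNReal.ofReal_one] at h
      exact lt_irrefl _ h
  -- hence D * D⁻¹ = 1 a.e. Q, so D ∈ (0,∞) a.e. Q
  have hmul : ∫⁻ y, P.rnDeriv Q y * (P.rnDeriv Q y)⁻¹ ∂Q = 1 := by
    rw [lintegral_rnDeriv_mul hPQ (f := fun y => (P.rnDeriv Q y)⁻¹) hD.inv.aemeasurable]; exact hLinv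
  have hae1 : ∀ᵐ y ∂Q, P.rnDeriv Q y * (P.rnDeriv Q y)⁻¹ = 1 := by
    have hle1 : ∀ y, P.rnDeriv Q y * (P.rnDeriv Q y)⁻¹ ≤ 1 := fun y => ENNReal.mul_inv_le_one _
    have hsub : ∫⁻ y, (1 - P.rnDeriv Q y * (P.rnDeriv Q y)⁻¹) ∂Q = 0 := by
      rw [lintegral_sub (g := fun y => P.rnDeriv Q y * (P.rnDeriv Q y)⁻¹) (hD.mul hD.inv) (by rw [hmul]; exact ENNReal.one_ne_top)
        (Filter.Eventually.of_forall hle1), hmul]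
      simp
    have := (lintegral_eq_zero_iff (by measurability)).mp hsub
    filter_upwards [this] with y hy
    simp only [Pi.zero_apply] at hy
    exact le_antisymm (hle1 y) (by rwa [tsub_eq_zero_iff_le] at hy)
  -- transfer D = 1 a.e. P to a.e. Q
  have hS : MeasurableSet {y | P.rnDeriv Q y ≠ 1} := (hD (measurableSet_singleton 1)).compl
  have hPS : P {y | P.rnDeriv Q y ≠ 1} = 0 := by
    simpa [ae_iff] using hone
  have hQS : ∀ᵐ y ∂Q, y ∈ {y | P.rnDeriv Q y ≠ 1} → P.rnDeriv Q y = 0 := by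
    have h0 : ∫⁻ y in {y | P.rnDeriv Q y ≠ 1}, P.rnDeriv Q y ∂Q = 0 := by
      rw [Measure.setLIntegral_rnDeriv hPQ _]; exact hPS
    exact (setLIntegral_eq_zero_iff hS hD).mp h0
  have honeQ : ∀ᵐ y ∂Q, P.rnDeriv Q y = 1 := by
    filter_upwards [hQS, hae1] with y h1 h2
    by_contra hne
    rw [h1 hne] at h2
    simp at h2
  calc P = Q.withDensity (P.rnDeriv Q) := (Measure.withDensity_rnDeriv_eq P Q hPQ).symm
    _ = Q.withDensity 1 := withDensity_congr_ae honeQ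
    _ = Q := by simp

end
section
variable {Y : Type*} [MeasurableSpace Y] {P Q R m : Measure Y}

lemma ofReal_abs_split (a : ℝ) :
    ENNReal.ofReal |a| = ENNReal.ofReal a + ENNReal.ofReal (-a) := by
  rcases le_total 0 a with h | h
  · rw [abs_of_nonneg h, ENNReal.ofReal_of_nonpos (neg_nonpos.mpr h), add_zero]
  · rw [abs_of_nonpos h, ENNReal.ofReal_of_nonpos h, zero_add]

lemma integrable_iff_ofReal_abs {f : Y → ℝ} (hf : Measurable f) :
    Integrable f P ↔ ∫⁻ a, ENNReal.ofReal |f a| ∂P < ⊤ := by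
  constructor
  · intro h
    have := (hasFiniteIntegral_iff_norm f).mp h.2
    simpa [Real.norm_eq_abs] using this
  · intro h
    exact ⟨hf.aestronglyMeasurable,
      (hasFiniteIntegral_iff_norm f).mpr (by simpa [Real.norm_eq_abs] using h)⟩

lemma lintegral_ofReal_llr_lt_top [IsProbabilityMeasure P]
    (hint : Integrable (llr P Q) P) : ∫⁻ y, ENNReal.ofReal (llr P Q y) ∂P < ⊤ := by
  refine lt_of_le_of_lt ?_ ((integrable_iff_ofReal_abs (measurable_llr P Q)).mp hint)
  refine lintegral_mono fun y => ?_
  rw [ofReal_abs_split]; exact le_self_add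

lemma lintegral_ofReal_neg_llr_lt_top [IsProbabilityMeasure P]
    (hint : Integrable (llr P Q) P) : ∫⁻ y, ENNReal.ofReal (-llr P Q y) ∂P < ⊤ := by
  refine lt_of_le_of_lt ?_ ((integrable_iff_ofReal_abs (measurable_llr P Q)).mp hint)
  refine lintegral_mono fun y => ?_
  rw [ofReal_abs_split]; exact le_add_self

/-- Chain rule for log-likelihood ratios. -/
lemma llr_add_llr_ae [SigmaFinite P] [SigmaFinite m] [SigmaFinite R]
    (hPm : P ≪ m) (hmR : m ≪ R) :
    llr P R =ᵐ[P] fun y => llr P m y + llr m R y := by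
  have hPR : P ≪ R := hPm.trans hmR
  filter_upwards [hPR.ae_le (Measure.rnDeriv_mul_rnDeriv hPm),
    Measure.rnDeriv_pos hPm, hPm.ae_le (P.rnDeriv_lt_top m),
    hPm.ae_le (Measure.rnDeriv_pos hmR), hPR.ae_le (m.rnDeriv_lt_top R)]
    with y hmul h1 h2 h3 h4
  simp only [Pi.mul_apply] at hmul
  rw [llr, llr, llr, ← hmul, ENNReal.toReal_mul,
    Real.log_mul (ENNReal.toReal_pos h1.ne' h2.ne).ne' (ENNReal.toReal_pos h3.ne' h4.ne).ne']

end
section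
variable {Y : Type*} [MeasurableSpace Y] {P R m : Measure Y}

/-- If `P` gives no mass to the set where `dm/dR` vanishes and `P ≪ R`, then `P ≪ m`. -/
lemma ac_of_rnDeriv_pos [SigmaFinite m] [SigmaFinite R] (hmR : m ≪ R) (hPR : P ≪ R)
    (hE1 : P {y | m.rnDeriv R y = 0} = 0) : P ≪ m := by
  intro N hN
  set N' := toMeasurable m N with hN'
  have hmN' : m N' = 0 := by rw [hN']; rwa [measure_toMeasurable]
  have hmeasN' : MeasurableSet N' := measurableSet_toMeasurable m N
  have h0 : ∫⁻ y in N', m.rnDeriv R y ∂ R = 0 := by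
    rw [Measure.setLIntegral_rnDeriv hmR]; exact hmN'
  have hae : ∀ᵐ y ∂ R, y ∈ N' → m.rnDeriv R y = 0 :=
    (setLIntegral_eq_zero_iff hmeasN' (Measure.measurable_rnDeriv m R)).mp h0
  -- so N' ∩ {rnDeriv ≠ 0} is R-null, hence P-null; and N' ∩ {rnDeriv = 0} is P-null
  have hR0 : R (N' ∩ {y | m.rnDeriv R y ≠ 0}) = 0 := by
    rw [measure_eq_zero_iff_ae_notMem]
    filter_upwards [hae] with y hy
    rintro ⟨h1, h2⟩; exact h2 (hy h1)
  have hsub : N' ⊆ (N' ∩ {y | m.rnDeriv R y ≠ 0}) ∪ {y | m.rnDeriv R y = 0} := by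
    intro y hy
    by_cases h : m.rnDeriv R y = 0
    · exact Or.inr h
    · exact Or.inl ⟨hy, h⟩
  have : P N' = 0 := by
    refine le_antisymm ?_ zero_le
    calc P N' ≤ P ((N' ∩ {y | m.rnDeriv R y ≠ 0}) ∪ {y | m.rnDeriv R y = 0}) :=
          measure_mono hsub
      _ ≤ P (N' ∩ {y | m.rnDeriv R y ≠ 0}) + P {y | m.rnDeriv R y = 0} := measure_union_le _ _
      _ = 0 := by rw [hPR hR0, hE1, add_zero]
  exact le_antisymm (le_trans (measure_mono (subset_toMeasurable m N)) this.le) zero_le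

end
section
variable {Y : Type*} [MeasurableSpace Y] {P Q R m : Measure Y}


/-- positive part of llr of the mixture compared with that of `P`. -/
lemma lintegral_ofReal_llr_mix_le [IsProbabilityMeasure P] [IsProbabilityMeasure R]
    [IsProbabilityMeasure m] (hmR : m ≪ R) (hPR : P ≪ R) :
    ∫⁻ y, ENNReal.ofReal (llr m R y) ∂P ≤ ∫⁻ y, ENNReal.ofReal (llr P R y) ∂P + 1 := by
  set F := P.rnDeriv R
  set G := m.rnDeriv R
  have hF : Measurable F := Measure.measurable_rnDeriv P R
  have hG : Measurable G := Measure.measurable_rnDeriv m R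
  have hpoint : ∀ᵐ y ∂P, ENNReal.ofReal (llr m R y)
      ≤ ENNReal.ofReal (llr P R y) + (F y)⁻¹ * G y := by
    filter_upwards [Measure.rnDeriv_pos hPR, hPR.ae_le (P.rnDeriv_lt_top R),
      hPR.ae_le (m.rnDeriv_lt_top R)] with y hF0 hFt hGt
    by_cases hG0 : G y = 0
    · rw [llr, show m.rnDeriv R y = (0:ℝ≥0∞) from hG0]
      simp
    have hFt0 : 0 < (F y).toReal := ENNReal.toReal_pos hF0.ne' hFt.ne
    have hGt0 : 0 < (G y).toReal := ENNReal.toReal_pos hG0 hGt.ne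
    have hlog : llr m R y = llr P R y + Real.log ((G y).toReal / (F y).toReal) := by
      rw [llr, llr]
      rw [← Real.log_mul hFt0.ne' (by positivity)]
      congr 1
      field_simp
      rfl
    rw [hlog]
    refine le_trans (ENNReal.ofReal_add_le) (add_le_add le_rfl ?_)
    calc ENNReal.ofReal (Real.log ((G y).toReal / (F y).toReal))
        ≤ ENNReal.ofReal ((G y).toReal / (F y).toReal) :=
          ENNReal.ofReal_le_ofReal
            ((Real.log_le_sub_one_of_pos (by positivity)).trans (by linarith))
      _ = (F y)⁻¹ * G y := by
          rw [div_eq_mul_inv, ENNReal.ofReal_mul hGt0.le,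
            ENNReal.ofReal_toReal hGt.ne, ← ENNReal.toReal_inv,
            ENNReal.ofReal_toReal (ENNReal.inv_ne_top.mpr hF0.ne'), mul_comm]
  calc ∫⁻ y, ENNReal.ofReal (llr m R y) ∂P
      ≤ ∫⁻ y, (ENNReal.ofReal (llr P R y) + (F y)⁻¹ * G y) ∂P := lintegral_mono_ae hpoint
    _ = ∫⁻ y, ENNReal.ofReal (llr P R y) ∂P + ∫⁻ y, (F y)⁻¹ * G y ∂P :=
        lintegral_add_right _ (hF.inv.mul hG)
    _ ≤ ∫⁻ y, ENNReal.ofReal (llr P R y) ∂P + 1 := by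
        refine add_le_add le_rfl ?_
        rw [← lintegral_rnDeriv_mul hPR (f := fun y => (F y)⁻¹ * G y) (hF.inv.mul hG).aemeasurable]
        calc ∫⁻ y, F y * ((F y)⁻¹ * G y) ∂ R ≤ ∫⁻ y, G y ∂ R := by
              refine lintegral_mono fun y => ?_
              rw [← mul_assoc]
              exact mul_le_of_le_one_left' (ENNReal.mul_inv_le_one _) |>.trans le_rfl
          _ ≤ m Set.univ := Measure.lintegral_rnDeriv_le
          _ = 1 := measure_univ
    
/-- positive part of llr is bounded by the KL integral plus 1. -/
lemma lintegral_ofReal_llr_le [IsProbabilityMeasure P] [IsProbabilityMeasure R]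
    (hPR : P ≪ R) (hint : Integrable (llr P R) P) :
    ∫⁻ y, ENNReal.ofReal (llr P R y) ∂P ≤ ENNReal.ofReal (∫ y, llr P R y ∂P) + 1 := by
  set a := ∫⁻ y, ENNReal.ofReal (llr P R y) ∂P with ha
  set b := ∫⁻ y, ENNReal.ofReal (-llr P R y) ∂P with hb
  have hb1 : b ≤ 1 := lintegral_ofReal_neg_llr_le hPR
  have hat : a ≠ ⊤ := (lintegral_ofReal_llr_lt_top hint).ne
  have hbt : b ≠ ⊤ := (hb1.trans_lt ENNReal.one_lt_top).ne
  have hI : ∫ y, llr P R y ∂P = a.toReal - b.toReal :=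
    integral_eq_lintegral_pos_part_sub_lintegral_neg_part hint
  calc a = ENNReal.ofReal (a.toReal) := (ENNReal.ofReal_toReal hat).symm
    _ = ENNReal.ofReal ((∫ y, llr P R y ∂P) + b.toReal) := by rw [hI]; ring_nf
    _ ≤ ENNReal.ofReal (∫ y, llr P R y ∂P) + ENNReal.ofReal b.toReal := ENNReal.ofReal_add_le
    _ = ENNReal.ofReal (∫ y, llr P R y ∂P) + b := by rw [ENNReal.ofReal_toReal hbt]
    _ ≤ ENNReal.ofReal (∫ y, llr P R y ∂P) + 1 := add_le_add le_rfl hb1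

end
end KLAux

end

open scoped ENNReal

open Classical in
/-- Kullback–Leibler divergence with values in `[0, ∞]`: `∫ log(dP/dR) dP` when `P ≪ R`
and the log-likelihood ratio is integrable, and `∞` otherwise. -/
noncomputable def klDiv' {Y : Type*} [MeasurableSpace Y] (P R : Measure Y) : ℝ≥0∞ :=
  if P ≪ R ∧ Integrable (llr P R) P then ENNReal.ofReal (∫ y, llr P R y ∂P) else ⊤

lemma klDiv'_pos {Y : Type*} [MeasurableSpace Y] {P R : Measure Y}
    (h : P ≪ R ∧ Integrable (llr P R) P) :
    klDiv' P R = ENNReal.ofReal (∫ y, llr P R y ∂P) := by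
  rw [klDiv', if_pos h]

lemma klDiv'_neg {Y : Type*} [MeasurableSpace Y] {P R : Measure Y}
    (h : ¬ (P ≪ R ∧ Integrable (llr P R) P)) : klDiv' P R = ⊤ := by
  rw [klDiv', if_neg h]

/-- The mixture distribution minimizes the Bayesian redundancy: the redundancy of any `R`
decomposes as the redundancy of the mixture `m` plus `D(m‖R)`; hence `m` is the minimizer,
and it is the unique one when the minimal redundancy is finite. -/
theorem mixture_minimizes_bayesian_redundancy {Θ Y : Type*}
    [MeasurableSpace Θ] [MeasurableSpace Y]
    (μ : Measure Θ) [IsProbabilityMeasure μ]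
    (κ : ProbabilityTheory.Kernel Θ Y) [ProbabilityTheory.IsMarkovKernel κ]
    (m : Measure Y) (hm : m = μ.bind fun θ => κ θ) :
    (∀ R : Measure Y, IsProbabilityMeasure R →
      (∫⁻ θ, klDiv' (κ θ) R ∂μ = (∫⁻ θ, klDiv' (κ θ) m ∂μ) + klDiv' m R ∧
        ∫⁻ θ, klDiv' (κ θ) m ∂μ ≤ ∫⁻ θ, klDiv' (κ θ) R ∂μ)) ∧
    ((∫⁻ θ, klDiv' (κ θ) m ∂μ) ≠ ⊤ →
      ∀ R : Measure Y, IsProbabilityMeasure R →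
        ((∫⁻ θ, klDiv' (κ θ) R ∂μ) = ∫⁻ θ, klDiv' (κ θ) m ∂μ ↔ R = m)) := by
  haveI hmP : IsProbabilityMeasure m := by
    constructor
    rw [hm, Measure.bind_apply MeasurableSet.univ κ.measurable.aemeasurable]
    simp
  have key : ∀ R : Measure Y, IsProbabilityMeasure R →
      ∫⁻ θ, klDiv' (κ θ) R ∂μ = (∫⁻ θ, klDiv' (κ θ) m ∂μ) + klDiv' m R := by
    intro R hR
    by_cases hB : m ≪ R ∧ Integrable (llr m R) m
    ·
      obtain ⟨hmR, hint⟩ := hB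
      have hs_meas : Measurable (llr m R) := measurable_llr m R
      set χp : Θ → ℝ≥0∞ := fun θ => ∫⁻ y, ENNReal.ofReal (llr m R y) ∂(κ θ) with hχp_def
      set χn : Θ → ℝ≥0∞ := fun θ => ∫⁻ y, ENNReal.ofReal (-llr m R y) ∂(κ θ) with hχn_def
      have hχp_meas : Measurable χp := Measurable.lintegral_kernel (κ := κ) hs_meas.ennreal_ofReal
      have hχn_meas : Measurable χn := Measurable.lintegral_kernel (κ := κ) hs_meas.neg.ennreal_ofReal
      have hbindg : ∀ g : Y → ℝ≥0∞, Measurable g →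
          ∫⁻ θ, (∫⁻ y, g y ∂(κ θ)) ∂μ = ∫⁻ y, g y ∂m := by
        intro g hg
        rw [hm, Measure.lintegral_bind κ.measurable.aemeasurable hg.aemeasurable]
      have hcp : ∫⁻ θ, χp θ ∂μ = ∫⁻ y, ENNReal.ofReal (llr m R y) ∂m :=
        hbindg _ hs_meas.ennreal_ofReal
      have hcn : ∫⁻ θ, χn θ ∂μ = ∫⁻ y, ENNReal.ofReal (-llr m R y) ∂m :=
        hbindg _ hs_meas.neg.ennreal_ofReal
      have hcp_fin : ∫⁻ θ, χp θ ∂μ ≠ ⊤ := by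
        rw [hcp]; exact (KLAux.lintegral_ofReal_llr_lt_top hint).ne
      have hcn_fin : ∫⁻ θ, χn θ ∂μ ≠ ⊤ := by
        rw [hcn]; exact (KLAux.lintegral_ofReal_neg_llr_lt_top hint).ne
      set Z := {y | m.rnDeriv R y = 0} with hZ_def
      have hZmeas : MeasurableSet Z := Measure.measurable_rnDeriv m R (measurableSet_singleton 0)
      have hmZ : m Z = 0 := by
        rw [← Measure.setLIntegral_rnDeriv hmR]
        calc ∫⁻ y in Z, m.rnDeriv R y ∂ R = ∫⁻ _ in Z, 0 ∂ R :=
              setLIntegral_congr_fun hZmeas (fun y hy => hy)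
          _ = 0 := by simp
      have hE1 : ∀ᵐ θ ∂μ, κ θ Z = 0 := by
        have h0 : ∫⁻ θ, κ θ Z ∂μ = 0 := by
          rw [← Measure.bind_apply hZmeas κ.measurable.aemeasurable, ← hm, hmZ]
        have := (lintegral_eq_zero_iff (κ.measurable_coe hZmeas)).mp h0
        filter_upwards [this] with θ hθ
        simpa using hθ
      have hE2p : ∀ᵐ θ ∂μ, χp θ < ⊤ := ae_lt_top hχp_meas hcp_fin
      have hE2n : ∀ᵐ θ ∂μ, χn θ < ⊤ := ae_lt_top hχn_meas hcn_fin
      have hae : ∀ᵐ θ ∂μ, klDiv' (κ θ) R + χn θ = klDiv' (κ θ) m + χp θ := by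
        filter_upwards [hE1, hE2p, hE2n] with θ h1 h2 h3
        set P := κ θ with hP_def
        have hsint : Integrable (llr m R) P := by
          refine (KLAux.integrable_iff_ofReal_abs hs_meas).mpr ?_
          have hsplit : ∫⁻ y, ENNReal.ofReal |llr m R y| ∂P = χp θ + χn θ := by
            rw [hχp_def, hχn_def, ← lintegral_add_left hs_meas.ennreal_ofReal]
            exact lintegral_congr fun y => KLAux.ofReal_abs_split _
          rw [hsplit]
          exact ENNReal.add_lt_top.mpr ⟨h2, h3⟩
        by_cases hPR : P ≪ R
        · have hPm : P ≪ m := KLAux.ac_of_rnDeriv_pos hmR hPR h1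
          have hchain : llr P R =ᵐ[P] fun y => llr P m y + llr m R y :=
            KLAux.llr_add_llr_ae hPm hmR
          by_cases hintPm : Integrable (llr P m) P
          · have hintPR : Integrable (llr P R) P := by
              refine Integrable.congr (hintPm.add hsint) ?_
              exact hchain.symm
            rw [klDiv'_pos ⟨hPR, hintPR⟩, klDiv'_pos ⟨hPm, hintPm⟩]
            have hIeq : ∫ y, llr P R y ∂P = (∫ y, llr P m y ∂P) + ∫ y, llr m R y ∂P := by
              rw [integral_congr_ae hchain, integral_add hintPm hsint]
            have hIs : ∫ y, llr m R y ∂P = (χp θ).toReal - (χn θ).toReal :=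
              integral_eq_lintegral_pos_part_sub_lintegral_neg_part hsint
            have h0m : 0 ≤ ∫ y, llr P m y ∂P := KLAux.integral_llr_nonneg hPm hintPm
            have h0R : 0 ≤ ∫ y, llr P R y ∂P := KLAux.integral_llr_nonneg hPR hintPR
            rw [← ENNReal.ofReal_toReal h3.ne, ← ENNReal.ofReal_toReal h2.ne,
              ← ENNReal.ofReal_add h0R ENNReal.toReal_nonneg,
              ← ENNReal.ofReal_add h0m ENNReal.toReal_nonneg]
            congr 1
            rw [hIeq, hIs]
            ring
          · have hnPR : ¬ Integrable (llr P R) P := by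
              intro hPRint
              apply hintPm
              refine Integrable.congr (hPRint.sub hsint) ?_
              filter_upwards [hchain] with y hy
              simp only [Pi.sub_apply]
              rw [hy]
              ring
            rw [klDiv'_neg fun hc => hnPR hc.2, klDiv'_neg fun hc => hintPm hc.2,
              top_add, top_add]
        · have hnPm : ¬ P ≪ m := fun hPm => hPR (hPm.trans hmR)
          rw [klDiv'_neg fun hc => hPR hc.1, klDiv'_neg fun hc => hnPm hc.1, top_add, top_add]
      have hadd : ∫⁻ θ, klDiv' (κ θ) R ∂μ + ∫⁻ θ, χn θ ∂μ
          = ∫⁻ θ, klDiv' (κ θ) m ∂μ + ∫⁻ θ, χp θ ∂μ := by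
        rw [← lintegral_add_right _ hχn_meas, ← lintegral_add_right _ hχp_meas]
        exact lintegral_congr_ae hae
      have hGibbs : 0 ≤ ∫ y, llr m R y ∂m := KLAux.integral_llr_nonneg hmR hint
      have hIm : ∫ y, llr m R y ∂m
          = (∫⁻ y, ENNReal.ofReal (llr m R y) ∂m).toReal
            - (∫⁻ y, ENNReal.ofReal (-llr m R y) ∂m).toReal :=
        integral_eq_lintegral_pos_part_sub_lintegral_neg_part hint
      have hcn_fin' : (∫⁻ y, ENNReal.ofReal (-llr m R y) ∂m) ≠ ⊤ := by
        rw [← hcn]; exact hcn_fin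
      have hcp_fin' : (∫⁻ y, ENNReal.ofReal (llr m R y) ∂m) ≠ ⊤ := by
        rw [← hcp]; exact hcp_fin
      have hcpB : ∫⁻ θ, χp θ ∂μ = klDiv' m R + ∫⁻ θ, χn θ ∂μ := by
        rw [klDiv'_pos ⟨hmR, hint⟩, hcp, hcn,
          ← ENNReal.ofReal_toReal hcn_fin',
          ← ENNReal.ofReal_add hGibbs ENNReal.toReal_nonneg, hIm, sub_add_cancel]
        exact (ENNReal.ofReal_toReal hcp_fin').symm
      rw [hcpB] at hadd
      rw [← add_assoc] at hadd
      exact (ENNReal.add_left_inj (hcn_fin)).mp hadd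
    ·
      rw [klDiv'_neg hB, add_top]
      by_cases hac : m ≪ R
      · -- integrability fails
        have hint : ¬ Integrable (llr m R) m := fun h => hB ⟨hac, h⟩
        have htop : ∫⁻ y, ENNReal.ofReal (llr m R y) ∂m = ⊤ := by
          by_contra hfin
          apply hint
          refine (KLAux.integrable_iff_ofReal_abs (measurable_llr m R)).mpr ?_
          have hsplit : ∫⁻ y, ENNReal.ofReal |llr m R y| ∂m
              = ∫⁻ y, ENNReal.ofReal (llr m R y) ∂m + ∫⁻ y, ENNReal.ofReal (-llr m R y) ∂m := by
            rw [← lintegral_add_left (measurable_llr m R).ennreal_ofReal]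
            exact lintegral_congr fun y => KLAux.ofReal_abs_split _
          rw [hsplit]
          exact ENNReal.add_lt_top.mpr ⟨lt_top_iff_ne_top.mpr hfin,
            (KLAux.lintegral_ofReal_neg_llr_le hac).trans_lt ENNReal.one_lt_top⟩
        have hbind : ∫⁻ θ, (∫⁻ y, ENNReal.ofReal (llr m R y) ∂(κ θ)) ∂μ = ⊤ := by
          rw [← Measure.lintegral_bind κ.measurable.aemeasurable (measurable_llr m R).ennreal_ofReal.aemeasurable, ← hm, htop]
        have hpt : ∀ θ, (∫⁻ y, ENNReal.ofReal (llr m R y) ∂(κ θ)) ≤ klDiv' (κ θ) R + 2 := by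
          intro θ
          by_cases hθ : κ θ ≪ R ∧ Integrable (llr (κ θ) R) (κ θ)
          · rw [klDiv'_pos hθ]
            calc ∫⁻ y, ENNReal.ofReal (llr m R y) ∂(κ θ)
                ≤ ∫⁻ y, ENNReal.ofReal (llr (κ θ) R y) ∂(κ θ) + 1 :=
                  KLAux.lintegral_ofReal_llr_mix_le hac hθ.1
              _ ≤ (ENNReal.ofReal (∫ y, llr (κ θ) R y ∂(κ θ)) + 1) + 1 :=
                  add_le_add_left (KLAux.lintegral_ofReal_llr_le hθ.1 hθ.2) 1
              _ = ENNReal.ofReal (∫ y, llr (κ θ) R y ∂(κ θ)) + 2 := by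
                  rw [add_assoc]; norm_num
          · rw [klDiv'_neg hθ, top_add]; exact le_top
        have hLtop : ∫⁻ θ, klDiv' (κ θ) R ∂μ + 2 = ⊤ := by
          rw [eq_top_iff, ← hbind]
          calc ∫⁻ θ, (∫⁻ y, ENNReal.ofReal (llr m R y) ∂(κ θ)) ∂μ
              ≤ ∫⁻ θ, (klDiv' (κ θ) R + 2) ∂μ := lintegral_mono hpt
            _ = ∫⁻ θ, klDiv' (κ θ) R ∂μ + ∫⁻ _, (2:ℝ≥0∞) ∂μ :=
                lintegral_add_right _ measurable_const
            _ = ∫⁻ θ, klDiv' (κ θ) R ∂μ + 2 := by simp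
        rcases ENNReal.add_eq_top.mp hLtop with h | h
        · exact h
        · exact absurd h (by simp)
      · -- not absolutely continuous
        have hex : ∃ t : Set Y, MeasurableSet t ∧ R t = 0 ∧ m t ≠ 0 := by
          by_contra hno
          push_neg at hno
          exact hac (Measure.AbsolutelyContinuous.mk fun t ht hRt => hno t ht hRt)
        obtain ⟨t, ht, hRt, hmt⟩ := hex
        have hmt' : m t = ∫⁻ θ, κ θ t ∂μ := by rw [hm, Measure.bind_apply ht κ.measurable.aemeasurable]
        set u := {θ | κ θ t ≠ 0} with hu
        have humeas : MeasurableSet u :=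
          ((κ.measurable_coe ht) (measurableSet_singleton 0)).compl
        have hμu : μ u ≠ 0 := by
          intro h0
          apply hmt
          rw [hmt']
          rw [lintegral_eq_zero_iff (κ.measurable_coe ht)]
          rw [Filter.EventuallyEq, ae_iff]
          simpa using h0
        rw [eq_top_iff]
        calc (⊤:ℝ≥0∞) = ∫⁻ _ in u, (⊤:ℝ≥0∞) ∂μ := by
              rw [setLIntegral_const]
              exact (ENNReal.top_mul hμu).symm
          _ ≤ ∫⁻ θ in u, klDiv' (κ θ) R ∂μ := by
              refine setLIntegral_mono' humeas fun θ hθ => ?_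
              have hnac : ¬ (κ θ ≪ R) := fun hAC => hθ (hAC hRt)
              rw [klDiv'_neg fun hc => hnac hc.1]
          _ ≤ ∫⁻ θ, klDiv' (κ θ) R ∂μ := lintegral_mono' Measure.restrict_le_self le_rfl
  refine ⟨fun R hR => ⟨key R hR, ?_⟩, ?_⟩
  · rw [key R hR]; exact le_self_add
  · intro hA R hR
    constructor
    · intro hLA
      have hk := key R hR
      rw [hLA] at hk
      have hB0 : klDiv' m R = 0 := by
        have := hk
        nth_rewrite 1 [← add_zero (∫⁻ θ, klDiv' (κ θ) m ∂μ)] at this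
        exact ((ENNReal.add_right_inj hA).mp this).symm
      by_cases hB : m ≪ R ∧ Integrable (llr m R) m
      · rw [klDiv'_pos hB] at hB0
        have hle : ∫ y, llr m R y ∂m ≤ 0 := by
          by_contra hgt
          push_neg at hgt
          rw [ENNReal.ofReal_eq_zero] at hB0
          linarith
        exact (KLAux.eq_of_integral_llr_nonpos hB.1 hB.2 hle).symm
      · rw [klDiv'_neg hB] at hB0
        exact absurd hB0 (by simp)
    · rintro rfl; rfl
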